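/- Let n ≥ 1, let B be a nondegenerate symmetric ℚ-bilinear form on ℚⁿ, and let Λ_R ⊆ Λ be lattices in ℚⁿ with B(λ,α) ∈ ℤ for all λ ∈ Λ and α ∈ Λ_R. Let ℓ = ℓ₁·ℓ₂ with ℓ₁, ℓ₂ ≥ 1 and gcd(ℓ₁, [Λ_R^B : Λ]) = 1, and let A: Λ → Λ be an additive endomorphism with A(Λ) = Λ ∩ ℓ₂·Λ_R^B and A(Λ_R) = Λ_R ∩ ℓ₂·Λ^B. Then the endomorphism ℓ₁·A satisfies (ℓ₁·A)(Λ) = Λ ∩ ℓ·Λ_R^B and (ℓ₁·A)(Λ_R) = Λ_R ∩ ℓ·Λ^B. -/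

import Mathlib

/-- A lattice in `ℚⁿ`: a subgroup generated by a `ℚ`-basis. -/
def IsLattice {n : ℕ} (L : AddSubgroup (Fin n → ℚ)) : Prop :=
  ∃ b : Module.Basis (Fin n) ℚ (Fin n → ℚ), L = AddSubgroup.closure (Set.range b)

/-- The dual lattice `L^B` of `L` with respect to a bilinear form `B`. -/
def dualLattice {n : ℕ} (B : (Fin n → ℚ) →ₗ[ℚ] (Fin n → ℚ) →ₗ[ℚ] ℚ)
    (L : AddSubgroup (Fin n → ℚ)) : AddSubgroup (Fin n → ℚ) where
  carrier := {x | ∀ y ∈ L, ∃ k : ℤ, B x y = (k : ℚ)}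
  zero_mem' := fun y _ => ⟨0, by simp⟩
  add_mem' := by
    intro a b ha hb y hy
    obtain ⟨k, hk⟩ := ha y hy
    obtain ⟨m, hm⟩ := hb y hy
    exact ⟨k + m, by simp [map_add, hk, hm]⟩
  neg_mem' := by
    intro a ha y hy
    obtain ⟨k, hk⟩ := ha y hy
    exact ⟨-k, by simp [hk]⟩

/-- The lattice `ℓ·L`. -/
def smulLat {n : ℕ} (ℓ : ℕ) (L : AddSubgroup (Fin n → ℚ)) : AddSubgroup (Fin n → ℚ) :=
  L.map (DistribMulAction.toAddMonoidHom (Fin n → ℚ) ((ℓ : ℚ)))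

lemma mem_dualLattice {n : ℕ} (B : (Fin n → ℚ) →ₗ[ℚ] (Fin n → ℚ) →ₗ[ℚ] ℚ)
    {L : AddSubgroup (Fin n → ℚ)} {x : Fin n → ℚ} :
    x ∈ dualLattice B L ↔ ∀ y ∈ L, ∃ k : ℤ, B x y = (k : ℚ) := Iff.rfl

/-- The dual of the lattice on a basis `b` is the lattice on the `B`-dual basis. -/
lemma dualLattice_closure {n : ℕ} (B : (Fin n → ℚ) →ₗ[ℚ] (Fin n → ℚ) →ₗ[ℚ] ℚ)
    (b c : Module.Basis (Fin n) ℚ (Fin n → ℚ))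
    (h : ∀ i j, B (c i) (b j) = if i = j then 1 else 0) :
    dualLattice B (AddSubgroup.closure (Set.range b))
      = AddSubgroup.closure (Set.range c) := by
  apply le_antisymm
  · intro x hx
    have hrepr : ∀ j, B x (b j) = c.repr x j := by
      intro j
      conv_lhs => rw [← c.sum_repr x]
      rw [map_sum, LinearMap.sum_apply]
      simp only [map_smul, LinearMap.smul_apply, h, smul_eq_mul, mul_ite, mul_one, mul_zero]
      simp
    have key : ∀ j, ∃ k : ℤ, c.repr x j = (k : ℚ) := by
      intro j
      obtain ⟨k, hk⟩ := hx (b j) (AddSubgroup.subset_closure (Set.mem_range_self j))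
      exact ⟨k, by rw [← hrepr j, hk]⟩
    choose k hk using key
    have hx' : x = ∑ i, (k i : ℚ) • c i := by
      conv_lhs => rw [← c.sum_repr x]
      exact Finset.sum_congr rfl fun i _ => by rw [hk]
    rw [hx']
    refine AddSubgroup.sum_mem _ fun i _ => ?_
    rw [Int.cast_smul_eq_zsmul]
    exact AddSubgroup.zsmul_mem _ (AddSubgroup.subset_closure (Set.mem_range_self i)) _
  · rw [AddSubgroup.closure_le]
    rintro v ⟨i, rfl⟩
    intro y hy
    induction hy using AddSubgroup.closure_induction with
    | mem z hz =>
      obtain ⟨j, rfl⟩ := hz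
      exact ⟨if i = j then 1 else 0, by rw [h]; split <;> simp⟩
    | zero => exact ⟨0, by simp⟩
    | add y z _ _ hy hz =>
      obtain ⟨ky, hky⟩ := hy
      obtain ⟨kz, hkz⟩ := hz
      exact ⟨ky + kz, by simp [map_add, hky, hkz]⟩
    | neg y _ hy =>
      obtain ⟨ky, hky⟩ := hy
      exact ⟨-ky, by simp [hky]⟩

/-- Biduality for lattices. -/
lemma bidual {n : ℕ} (B : (Fin n → ℚ) →ₗ[ℚ] (Fin n → ℚ) →ₗ[ℚ] ℚ)
    (hBsymm : ∀ x y, B x y = B y x)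
    (hBnd : ∀ x, (∀ y, B x y = 0) → x = 0)
    (L : AddSubgroup (Fin n → ℚ)) (hL : IsLattice L) :
    dualLattice B (dualLattice B L) = L := by
  obtain ⟨b, rfl⟩ := hL
  have hfd : FiniteDimensional ℚ (Fin n → ℚ) := inferInstance
  have hnd : LinearMap.BilinForm.Nondegenerate B :=
    ⟨fun x h => hBnd x h, fun y h => hBnd y fun x => by rw [hBsymm]; exact h x⟩
  set c := LinearMap.BilinForm.dualBasis B hnd b with hc
  have h1 : ∀ i j, B (c i) (b j) = if i = j then 1 else 0 := by
    intro i j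
    rw [hc, LinearMap.BilinForm.apply_dualBasis_left]
    simp [eq_comm]
  have h2 : ∀ i j, B (b i) (c j) = if i = j then 1 else 0 := by
    intro i j
    rw [hBsymm, h1]
    simp [eq_comm]
  rw [dualLattice_closure B b c h1, dualLattice_closure B c b h2]

/-- Core scaling lemma. -/
lemma core_smul {n : ℕ} (L D : AddSubgroup (Fin n → ℚ)) (ℓ₁ ℓ₂ : ℕ)
    (hsat : ∀ z ∈ D, ℓ₁ • z ∈ L → z ∈ L) :
    (L ⊓ smulLat ℓ₂ D).map (DistribMulAction.toAddMonoidHom (Fin n → ℚ) ((ℓ₁ : ℚ)))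
      = L ⊓ smulLat (ℓ₁ * ℓ₂) D := by
  ext x
  simp only [AddSubgroup.mem_map, AddSubgroup.mem_inf, smulLat,
    DistribMulAction.toAddMonoidHom_apply]
  constructor
  · rintro ⟨w, ⟨hwL, d, hd, rfl⟩, rfl⟩
    refine ⟨?_, d, hd, ?_⟩
    · rw [Nat.cast_smul_eq_nsmul]
      exact AddSubgroup.nsmul_mem _ hwL ℓ₁
    · rw [smul_smul]
      push_cast
      rfl
  · rintro ⟨hxL, d, hd, rfl⟩
    have heq : (ℓ₁ : ℚ) • ((ℓ₂ : ℚ) • d) = ((ℓ₁ * ℓ₂ : ℕ) : ℚ) • d := by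
      rw [smul_smul]; norm_cast
    refine ⟨(ℓ₂ : ℚ) • d, ⟨?_, d, hd, rfl⟩, heq⟩
    apply hsat
    · rw [Nat.cast_smul_eq_nsmul]
      exact AddSubgroup.nsmul_mem _ hd ℓ₂
    · rw [← Nat.cast_smul_eq_nsmul ℚ, heq]
      exact hxL

theorem stmt3 {n : ℕ} (hn : 1 ≤ n)
    (B : (Fin n → ℚ) →ₗ[ℚ] (Fin n → ℚ) →ₗ[ℚ] ℚ)
    (hBsymm : ∀ x y, B x y = B y x)
    (hBnd : ∀ x, (∀ y, B x y = 0) → x = 0)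
    (ΛR Λ : AddSubgroup (Fin n → ℚ))
    (hΛR : IsLattice ΛR) (hΛ : IsLattice Λ) (hsub : ΛR ≤ Λ)
    (hint : ∀ lam ∈ Λ, ∀ α ∈ ΛR, ∃ k : ℤ, B lam α = (k : ℚ))
    (ℓ ℓ₁ ℓ₂ : ℕ) (hℓ₁ : 1 ≤ ℓ₁) (hℓ₂ : 1 ≤ ℓ₂) (hℓ : ℓ = ℓ₁ * ℓ₂)
    (hcop : Nat.Coprime ℓ₁ (Λ.relIndex (dualLattice B ΛR)))
    (A : (Fin n → ℚ) →+ (Fin n → ℚ))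
    (hAmem : ∀ x ∈ Λ, A x ∈ Λ)
    (hA1 : Λ.map A = Λ ⊓ smulLat ℓ₂ (dualLattice B ΛR))
    (hA2 : ΛR.map A = ΛR ⊓ smulLat ℓ₂ (dualLattice B Λ)) :
    Λ.map ((DistribMulAction.toAddMonoidHom (Fin n → ℚ) ((ℓ₁ : ℚ))).comp A)
        = Λ ⊓ smulLat ℓ (dualLattice B ΛR) ∧
    ΛR.map ((DistribMulAction.toAddMonoidHom (Fin n → ℚ) ((ℓ₁ : ℚ))).comp A)
        = ΛR ⊓ smulLat ℓ (dualLattice B Λ) := by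
  set D := dualLattice B ΛR with hD
  set E := dualLattice B Λ with hE
  set m := Λ.relIndex D with hm
  -- m • z ∈ Λ for z ∈ D
  have hmD : ∀ z ∈ D, m • z ∈ Λ := by
    intro z hz
    have := AddSubgroup.nsmul_index_mem (Λ.addSubgroupOf D) (⟨z, hz⟩ : D)
    rw [AddSubgroup.mem_addSubgroupOf] at this
    exact this
  -- m • z ∈ ΛR for z ∈ E, via biduality
  have hΛRbd : dualLattice B D = ΛR := bidual B hBsymm hBnd ΛR hΛR
  have hmE : ∀ z ∈ E, m • z ∈ ΛR := by
    intro z hz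
    rw [← hΛRbd]
    intro y hy
    obtain ⟨k, hk⟩ := hz (m • y) (hmD y hy)
    refine ⟨k, ?_⟩
    rw [← hk, ← Nat.cast_smul_eq_nsmul ℚ m z, ← Nat.cast_smul_eq_nsmul ℚ m y]
    simp [map_smul]
  -- Bezout
  obtain ⟨a, bb, hab⟩ : IsCoprime (ℓ₁ : ℤ) (m : ℤ) := Nat.isCoprime_iff_coprime.mpr hcop
  have bez : ∀ (L : AddSubgroup (Fin n → ℚ)), ∀ z, m • z ∈ L → ℓ₁ • z ∈ L → z ∈ L := by
    intro L z hmz hlz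
    have hz' : (a * (ℓ₁ : ℤ) + bb * (m : ℤ)) • z = z := by rw [hab, one_zsmul]
    rw [← hz', add_zsmul, mul_zsmul, mul_zsmul, natCast_zsmul, natCast_zsmul]
    exact AddSubgroup.add_mem _ (AddSubgroup.zsmul_mem _ hlz a) (AddSubgroup.zsmul_mem _ hmz bb)
  have hsat1 : ∀ z ∈ D, ℓ₁ • z ∈ Λ → z ∈ Λ := fun z hz => bez Λ z (hmD z hz)
  have hsat2 : ∀ z ∈ E, ℓ₁ • z ∈ ΛR → z ∈ ΛR := fun z hz => bez ΛR z (hmE z hz)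
  constructor
  · rw [← AddSubgroup.map_map, hA1, hℓ]
    exact core_smul Λ D ℓ₁ ℓ₂ hsat1
  · rw [← AddSubgroup.map_map, hA2, hℓ]
    exact core_smul ΛR E ℓ₁ ℓ₂ hsat2
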